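/- arXiv:0910.3509 — 3 statements merged into one kernel-verified Lean document; each statement's English description precedes it below -/
import Mathlib

section
/- Let f be a sub-modular function on a finite set V with f(∅) = 0, and let T ⊆ V. Then the facet F_{f,T} = {x ∈ P_f : x_T = f(T|T^c)} of the essential polytope P_f decomposes as a product: x ∈ F_{f,T} if and only if the restriction x|_T lies in the essential polytope of f₁(S) := f(S ∪ T^c) − f(T^c) on 2^T, and x|_{T^c} lies in the essential polytope of f₂(S) := f(S) on 2^{T^c}. -/
open Finset

/-- Membership in the essential polytope of a set function `g` with ground set `T`:
`∑_{v∈T} x v = g(T)` and `∑_{v∈S} x v ≥ g(S | T∖S) = g(T) − g(T∖S)` for all `S ⊆ T`. -/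
def essMem {V : Type*} [Fintype V] [DecidableEq V] (T : Finset V)
    (g : Finset V → ℝ) (x : V → ℝ) : Prop :=
  (∑ v ∈ T, x v = g T) ∧ ∀ S ⊆ T, g T - g (T \ S) ≤ ∑ v ∈ S, x v

/-- Facet decomposition: for sub-modular `f` with `f(∅) = 0`, a point `x` lies on the
facet `F_{f,T} = {x ∈ P_f : x_T = f(T|Tᶜ)}` of the essential polytope `P_f` iff the
restriction `x|_T` lies in the essential polytope of `f₁(S) = f(S ∪ Tᶜ) − f(Tᶜ)` on `2^T`
and `x|_{Tᶜ}` lies in the essential polytope of `f₂(S) = f(S)` on `2^{Tᶜ}`. -/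
theorem facet_decomposition {V : Type*} [Fintype V] [DecidableEq V]
    (f : Finset V → ℝ)
    (hsub : ∀ S T : Finset V, f (S ∩ T) + f (S ∪ T) ≤ f S + f T)
    (h0 : f ∅ = 0) (T : Finset V) (x : V → ℝ) :
    (essMem Finset.univ f x ∧ ∑ v ∈ T, x v = f Finset.univ - f Tᶜ) ↔
      (essMem T (fun S => f (S ∪ Tᶜ) - f Tᶜ) x ∧ essMem Tᶜ f x) := by
  have hsplit : ∑ v ∈ T, x v + ∑ v ∈ Tᶜ, x v = ∑ v ∈ Finset.univ, x v :=
    Finset.sum_add_sum_compl T x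
  constructor
  · rintro ⟨⟨hsum, hineq⟩, hT⟩
    have hTc : ∑ v ∈ Tᶜ, x v = f Tᶜ := by
      rw [hsum, hT] at hsplit; linarith
    refine ⟨⟨by simp [Finset.union_compl, hT], ?_⟩, hTc, ?_⟩
    · intro S hS
      have hset : (T \ S) ∪ Tᶜ = Finset.univ \ S := by
        ext v
        simp only [Finset.mem_union, Finset.mem_sdiff, Finset.mem_compl,
          Finset.mem_univ, true_and]
        constructor
        · rintro (⟨_, h⟩ | h)
          · exact h
          · exact fun hv => h (hS hv)
        · intro h
          by_cases hv : v ∈ T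
          · exact Or.inl ⟨hv, h⟩
          · exact Or.inr hv
      have := hineq S (Finset.subset_univ S)
      simp only [Finset.union_compl, hset]
      linarith
    · intro S hS
      have hdisj : Disjoint S T := fun u hu1 hu2 v hv => by
        have h1 := hS (hu1 hv)
        have h2 := hu2 hv
        simp only [Finset.mem_compl] at h1
        exact absurd h2 h1
      have hset : Finset.univ \ (S ∪ T) = Tᶜ \ S := by
        ext v
        simp only [Finset.mem_sdiff, Finset.mem_union, Finset.mem_compl,
          Finset.mem_univ, true_and]
        tauto
      have := hineq (S ∪ T) (Finset.subset_univ _)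
      rw [hset, Finset.sum_union hdisj] at this
      linarith
  · rintro ⟨⟨h1sum, h1⟩, h2sum, h2⟩
    simp only [Finset.union_compl] at h1sum
    refine ⟨⟨?_, ?_⟩, by linarith⟩
    · rw [← hsplit, h1sum, h2sum]; ring
    · intro S _
      have a := h1 (S ∩ T) (Finset.inter_subset_right)
      have b := h2 (S ∩ Tᶜ) (Finset.inter_subset_right)
      simp only [Finset.union_compl] at a
      have hset1 : (T \ (S ∩ T)) ∪ Tᶜ = Finset.univ \ (S ∩ T) := by
        ext v
        simp only [Finset.mem_union, Finset.mem_sdiff, Finset.mem_inter,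
          Finset.mem_compl, Finset.mem_univ, true_and]
        tauto
      have hset2 : Tᶜ \ (S ∩ Tᶜ) = Tᶜ ∩ (Finset.univ \ S) := by
        ext v
        simp only [Finset.mem_sdiff, Finset.mem_inter, Finset.mem_compl,
          Finset.mem_univ, true_and]
        tauto
      have hset3 : Tᶜ ∪ (Finset.univ \ S) = Finset.univ \ (S ∩ T) := by
        ext v
        simp only [Finset.mem_union, Finset.mem_sdiff, Finset.mem_inter,
          Finset.mem_compl, Finset.mem_univ, true_and]
        tauto
      have c := hsub Tᶜ (Finset.univ \ S)
      rw [hset3] at c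
      rw [hset1] at a
      rw [hset2] at b
      have hsumsplit : ∑ v ∈ S ∩ T, x v + ∑ v ∈ S ∩ Tᶜ, x v = ∑ v ∈ S, x v := by
        have h' : S ∩ Tᶜ = S \ T := by
          ext v
          simp only [Finset.mem_inter, Finset.mem_sdiff, Finset.mem_compl]
        rw [h']
        exact Finset.sum_inter_add_sum_sdiff S T x
      linarith
end

section
/- Let f be sub-modular on V with f(∅)=0 and T ⊆ V. If x ∈ ℝ^V satisfies x|_T in the essential polytope of f₁(S) = f(S|T^c) on 2^T and x|_{T^c} in the essential polytope of f₂(S) = f(S) on 2^{T^c}, then for every U ⊆ V, x_U ≥ f(U | U^c); i.e., x lies on the facet F_{f,T} of P_f. -/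
open Finset

/-- If `x|_T` lies in the essential polytope of `f₁(S) = f(S|Tᶜ)` on `2^T` and `x|_{Tᶜ}`
lies in the essential polytope of `f₂(S) = f(S)` on `2^{Tᶜ}`, then `x_U ≥ f(U|Uᶜ)` for
every `U ⊆ V`, i.e. `x` lies on the facet `F_{f,T}` of `P_f`. -/
theorem mem_facet_of_product {V : Type*} [Fintype V] [DecidableEq V]
    (f : Finset V → ℝ)
    (hsub : ∀ S T : Finset V, f (S ∩ T) + f (S ∪ T) ≤ f S + f T)
    (h0 : f ∅ = 0) (T : Finset V) (x : V → ℝ)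
    (hx1 : essMem T (fun S => f (S ∪ Tᶜ) - f Tᶜ) x)
    (hx2 : essMem Tᶜ f x) :
    (∀ U : Finset V, f Finset.univ - f Uᶜ ≤ ∑ v ∈ U, x v) ∧
    essMem Finset.univ f x ∧ (∑ v ∈ T, x v = f Finset.univ - f Tᶜ) := by
  obtain ⟨hx1e, hx1i⟩ := hx1
  obtain ⟨hx2e, hx2i⟩ := hx2
  have hTU : T ∪ Tᶜ = (Finset.univ : Finset V) := by simp
  have hsumT : ∑ v ∈ T, x v = f Finset.univ - f Tᶜ := by
    simpa [hTU] using hx1e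
  have key : ∀ U : Finset V, f Finset.univ - f Uᶜ ≤ ∑ v ∈ U, x v := by
    intro U
    have hsplit : ∑ v ∈ U, x v = (∑ v ∈ U ∩ T, x v) + ∑ v ∈ U ∩ Tᶜ, x v := by
      rw [← Finset.sum_union]
      · congr 1
        rw [← Finset.inter_union_distrib_left, hTU, Finset.inter_univ]
      · exact Finset.disjoint_left.mpr fun a ha hb => by
          have := Finset.mem_inter.mp ha
          have := Finset.mem_inter.mp hb
          simp_all
    have h1 : f Finset.univ - f (Uᶜ ∪ Tᶜ) ≤ ∑ v ∈ U ∩ T, x v := by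
      have := hx1i (U ∩ T) Finset.inter_subset_right
      have hset : T \ U ∪ Tᶜ = Uᶜ ∪ Tᶜ := by
        ext a; by_cases h : a ∈ T <;> simp [h]
      simpa [hTU, hset] using this
    have h2 : f Tᶜ - f (Uᶜ ∩ Tᶜ) ≤ ∑ v ∈ U ∩ Tᶜ, x v := by
      have := hx2i (U ∩ Tᶜ) Finset.inter_subset_right
      have hset : Tᶜ \ (U ∩ Tᶜ) = Uᶜ ∩ Tᶜ := by
        ext a; by_cases h : a ∈ T <;> simp [h]
      simpa [hset] using this
    have hsm := hsub Uᶜ Tᶜ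
    rw [hsplit]
    linarith
  refine ⟨key, ⟨?_, ?_⟩, hsumT⟩
  · have : (Finset.univ : Finset V) = T ∪ Tᶜ := hTU.symm
    rw [this, Finset.sum_union (disjoint_compl_right)]
    have : f (T ∪ Tᶜ) = f Finset.univ := by rw [hTU]
    rw [this]
    linarith
  · intro S _
    have := key S
    simpa [Finset.compl_eq_univ_sdiff] using this
end

section
/- With C and C* as above (L_k* = (T∩L_{k−1}) ∪ (T^c∩L_k)), for every S ⊆ T^c the layered conditional entropies satisfy h_C(S | T^c∖S) = h_{C*}(S | V∖S), where h_C(S) := Σ_{i=1}^{K+1} H(X_{S∩L_i} Y_{S∩L_{i−1}} | X_{L^i} Y_{L^{i−1}} Z) and h(A|B) := h(A∪B) − h(B). Hence the facet F_{h_C,T} of P_{h_C} coincides with the facet F_{h_{C*},T^c} of P_{h_{C*}}. -/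
open Finset in
/-- Probability that the discrete random variable `X` takes the value `a`,
under the weight function `p` on the finite sample space `Ω`. -/
noncomputable def pr {Ω : Type*} [Fintype Ω] {α : Type*} [DecidableEq α]
    (p : Ω → ℝ) (X : Ω → α) (a : α) : ℝ :=
  ∑ ω ∈ univ.filter (fun ω => X ω = a), p ω

/-- Shannon entropy (base 2) of a discrete random variable. (`0·log 0 = 0` since `logb 2 0 = 0`.) -/
noncomputable def ent {Ω : Type*} [Fintype Ω] {α : Type*} [Fintype α] [DecidableEq α]
    (p : Ω → ℝ) (X : Ω → α) : ℝ :=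
  -∑ a : α, pr p X a * Real.logb 2 (pr p X a)

/-- Conditional Shannon entropy `H(X|Z) = H(X,Z) − H(Z)`. -/
noncomputable def cent {Ω α β : Type*} [Fintype Ω] [Fintype α] [DecidableEq α]
    [Fintype β] [DecidableEq β] (p : Ω → ℝ) (X : Ω → α) (Z : Ω → β) : ℝ :=
  ent p (fun ω => (X ω, Z ω)) - ent p Z

/-- The tuple `X_S = (X_v : v ∈ S)` of a family of random variables, encoded with
`Option`: coordinates outside `S` are masked to `none`. -/
def mask {Ω V : Type*} [DecidableEq V] {α : V → Type*}
    (X : ∀ v, Ω → α v) (S : Finset V) : Ω → ∀ v, Option (α v) :=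
  fun ω v => if v ∈ S then some (X v ω) else none

open Finset

/-- Layered conditional entropy term: `H(X_{AX} Y_{AY} | X_{BX} Y_{BY} Z)`, for families
of discrete random variables `(X_v, Y_v : v ∈ V)` and side information `Z`. -/
noncomputable def ce {Ω V γ : Type*} [Fintype Ω] [Fintype V] [DecidableEq V]
    {α β : V → Type*} [∀ v, Fintype (α v)] [∀ v, DecidableEq (α v)]
    [∀ v, Fintype (β v)] [∀ v, DecidableEq (β v)] [Fintype γ] [DecidableEq γ]
    (p : Ω → ℝ) (X : ∀ v, Ω → α v) (Y : ∀ v, Ω → β v) (Z : Ω → γ)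
    (AX AY BX BY : Finset V) : ℝ :=
  cent p (fun ω => (mask X AX ω, mask Y AY ω))
    (fun ω => (mask X BX ω, mask Y BY ω, Z ω))

/-- `L^i = ∪_{k<i} L_k`, the union of the layers below layer `i`. -/
def lowUnion {V : Type*} [DecidableEq V] (L : ℕ → Finset V) (i : ℕ) : Finset V :=
  (Finset.range i).biUnion L

/-- `[L 1, …, L K]` is an ordered partition of `V` (with conventions `L 0 = ∅` and
`L i = ∅` for `i > K`). -/
def IsOrdPart {V : Type*} [Fintype V] [DecidableEq V] (K : ℕ) (L : ℕ → Finset V) : Prop :=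
  (∀ i, 1 ≤ i → i ≤ K → (L i).Nonempty) ∧
  (∀ i, i = 0 ∨ K < i → L i = ∅) ∧
  (∀ i j, i ≠ j → Disjoint (L i) (L j)) ∧
  (Finset.range (K + 1)).biUnion L = Finset.univ

/-- `h_C(S) = Σ_{i=1}^{K+1} H(X_{S∩L_i} Y_{S∩L_{i−1}} | X_{L^i} Y_{L^{i−1}} Z)`. -/
noncomputable def layerEnt {Ω V γ : Type*} [Fintype Ω] [Fintype V] [DecidableEq V]
    {α β : V → Type*} [∀ v, Fintype (α v)] [∀ v, DecidableEq (α v)]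
    [∀ v, Fintype (β v)] [∀ v, DecidableEq (β v)] [Fintype γ] [DecidableEq γ]
    (p : Ω → ℝ) (X : ∀ v, Ω → α v) (Y : ∀ v, Ω → β v) (Z : Ω → γ)
    (K : ℕ) (L : ℕ → Finset V) (S : Finset V) : ℝ :=
  ∑ i ∈ Finset.Icc 1 (K + 1),
    ce p X Y Z (S ∩ L i) (S ∩ L (i - 1)) (lowUnion L i) (lowUnion L (i - 1))

/-- `h_C(S|Sᶜ)`-style layered sum:
`Σ_{i=1}^{K+1} H(X_{S∩L_i} Y_{S∩L_{i−1}} | X_{L_i∖S} Y_{L_{i−1}∖S} X_{L^i} Y_{L^{i−1}} Z)`. -/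
noncomputable def layerCondEnt {Ω V γ : Type*} [Fintype Ω] [Fintype V] [DecidableEq V]
    {α β : V → Type*} [∀ v, Fintype (α v)] [∀ v, DecidableEq (α v)]
    [∀ v, Fintype (β v)] [∀ v, DecidableEq (β v)] [Fintype γ] [DecidableEq γ]
    (p : Ω → ℝ) (X : ∀ v, Ω → α v) (Y : ∀ v, Ω → β v) (Z : Ω → γ)
    (K : ℕ) (L : ℕ → Finset V) (S : Finset V) : ℝ :=
  ∑ i ∈ Finset.Icc 1 (K + 1),
    ce p X Y Z (S ∩ L i) (S ∩ L (i - 1))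
      ((L i \ S) ∪ lowUnion L i) ((L (i - 1) \ S) ∪ lowUnion L (i - 1))

/-- The interleaved partition `L*_k = (T ∩ L_{k−1}) ∪ (Tᶜ ∩ L_k)`. -/
def interleave {V : Type*} [Fintype V] [DecidableEq V] (L : ℕ → Finset V)
    (T : Finset V) (k : ℕ) : Finset V :=
  (T ∩ L (k - 1)) ∪ (Tᶜ ∩ L k)

/-- The facet `F_{f,T}` of the essential polytope of a set function `f` on `V`. -/
def facet {V : Type*} [Fintype V] [DecidableEq V] (f : Finset V → ℝ) (T : Finset V) :
    Set (V → ℝ) :=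
  {x | ((∑ v, x v = f Finset.univ) ∧
    ∀ S : Finset V, f Finset.univ - f Sᶜ ≤ ∑ v ∈ S, x v) ∧
    ∑ v ∈ T, x v = f Finset.univ - f Tᶜ}
section Aux

open Finset Real

variable {Ω : Type*} [Fintype Ω] {p : Ω → ℝ}

lemma pr_eq_sum_ite {α : Type*} [DecidableEq α] (X : Ω → α) (a : α) :
    pr p X a = ∑ ω, if X ω = a then p ω else 0 := by
  rw [pr, Finset.sum_filter]

lemma pr_nonneg {α : Type*} [DecidableEq α] (hp0 : ∀ ω, 0 ≤ p ω) (X : Ω → α) (a : α) :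
    0 ≤ pr p X a :=
  Finset.sum_nonneg fun ω _ => hp0 ω

lemma sum_pr_mul {α : Type*} [Fintype α] [DecidableEq α] (X : Ω → α) (g : α → ℝ) :
    ∑ a, pr p X a * g a = ∑ ω, p ω * g (X ω) := by
  simp only [pr_eq_sum_ite, Finset.sum_mul]
  rw [Finset.sum_comm]
  refine Finset.sum_congr rfl fun ω _ => ?_
  simp [ite_mul, Finset.sum_ite_eq]

lemma sum_pr {α : Type*} [Fintype α] [DecidableEq α] (X : Ω → α) :
    ∑ a, pr p X a = ∑ ω, p ω := by
  have := sum_pr_mul (p := p) X (fun _ => (1:ℝ))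
  simpa using this

lemma pr_comp_filter {α β : Type*} [Fintype α] [DecidableEq α] [DecidableEq β]
    (X : Ω → α) (pj : α → β) (b : β) :
    pr p (fun ω => pj (X ω)) b = ∑ a ∈ Finset.univ.filter (fun a => pj a = b), pr p X a := by
  simp only [pr_eq_sum_ite]
  rw [Finset.sum_comm]
  refine Finset.sum_congr rfl fun ω _ => ?_
  rw [Finset.sum_ite_eq]
  simp

lemma pr_le_pr_comp {α β : Type*} [Fintype α] [DecidableEq α] [DecidableEq β]
    (hp0 : ∀ ω, 0 ≤ p ω) (X : Ω → α) (pj : α → β) (a : α) :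
    pr p X a ≤ pr p (fun ω => pj (X ω)) (pj a) := by
  rw [pr_comp_filter X pj]
  exact Finset.single_le_sum (fun i _ => pr_nonneg hp0 X i)
    (Finset.mem_filter.2 ⟨Finset.mem_univ a, rfl⟩)

lemma ent_comp_expand {α β : Type*} [Fintype α] [DecidableEq α] [Fintype β] [DecidableEq β]
    (X : Ω → α) (pj : α → β) :
    ent p (fun ω => pj (X ω)) =
      -∑ a, pr p X a * Real.logb 2 (pr p (fun ω => pj (X ω)) (pj a)) := by
  rw [ent, neg_inj]
  rw [sum_pr_mul (p := p) (fun ω => pj (X ω)) (fun b => Real.logb 2 (pr p (fun ω => pj (X ω)) b))]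
  rw [sum_pr_mul (p := p) X (fun a => Real.logb 2 (pr p (fun ω => pj (X ω)) (pj a)))]

end Aux
section Aux2

open Finset Real

variable {Ω : Type*} [Fintype Ω] {p : Ω → ℝ}

lemma ent_pair_of_det {α β : Type*} [Fintype α] [DecidableEq α] [Fintype β] [DecidableEq β]
    (X : Ω → α) (Y : Ω → β) (h : ∀ ω ω', X ω = X ω' → Y ω = Y ω') :
    ent p (fun ω => (X ω, Y ω)) = ent p X := by
  rw [ent, ent, neg_inj, Fintype.sum_prod_type]
  refine Finset.sum_congr rfl fun a _ => ?_
  by_cases hex : ∃ ω, X ω = a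
  · obtain ⟨ω₀, hω₀⟩ := hex
    have hkey : pr p (fun ω => (X ω, Y ω)) (a, Y ω₀) = pr p X a := by
      rw [pr, pr]
      refine Finset.sum_congr ?_ (fun _ _ => rfl)
      ext ω
      simp only [Finset.mem_filter, Finset.mem_univ, true_and, Prod.mk.injEq]
      exact ⟨fun hh => hh.1, fun hx => ⟨hx, h ω ω₀ (by rw [hx, hω₀])⟩⟩
    rw [Finset.sum_eq_single (Y ω₀)]
    · rw [hkey]
    · intro b _ hb
      have : pr p (fun ω => (X ω, Y ω)) (a, b) = 0 := by
        rw [pr]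
        refine Finset.sum_eq_zero fun ω hω => ?_
        simp only [Finset.mem_filter, Prod.mk.injEq] at hω
        exact (hb (hω.2.2.symm.trans (h ω ω₀ (by rw [hω.2.1, hω₀])))).elim
      rw [this, zero_mul]
    · intro hb; exact absurd (Finset.mem_univ _) hb
  · push_neg at hex
    have h1 : pr p X a = 0 := by
      rw [pr]; exact Finset.sum_eq_zero fun ω hω => absurd (Finset.mem_filter.1 hω).2 (hex ω)
    have h2 : ∀ b, pr p (fun ω => (X ω, Y ω)) (a, b) = 0 := by
      intro b
      rw [pr]
      refine Finset.sum_eq_zero fun ω hω => ?_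
      simp only [Finset.mem_filter, Prod.mk.injEq] at hω
      exact absurd hω.2.1 (hex ω)
    simp [h1, h2]

lemma ent_comp_inj {α β : Type*} [Fintype α] [DecidableEq α] [Fintype β] [DecidableEq β]
    (X : Ω → α) (e : α → β) (he : Function.Injective e) :
    ent p (fun ω => e (X ω)) = ent p X := by
  rw [ent, ent, neg_inj]
  rw [← Finset.sum_subset (Finset.subset_univ (Finset.univ.image e))]
  · rw [Finset.sum_image (fun a _ a' _ hh => he hh)]
    refine Finset.sum_congr rfl fun a _ => ?_
    have : pr p (fun ω => e (X ω)) (e a) = pr p X a := by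
      rw [pr, pr]
      refine Finset.sum_congr ?_ (fun _ _ => rfl)
      ext ω; simp [he.eq_iff]
    rw [this]
  · intro b _ hb
    have : pr p (fun ω => e (X ω)) b = 0 := by
      rw [pr]
      refine Finset.sum_eq_zero fun ω hω => ?_
      exact absurd ((Finset.mem_filter.1 hω).2 ▸ Finset.mem_image_of_mem e (Finset.mem_univ (X ω))) (by simpa using hb)
    rw [this, zero_mul]

lemma ent_congr {α β : Type*} [Fintype α] [DecidableEq α] [Fintype β] [DecidableEq β]
    (X : Ω → α) (Y : Ω → β) (h : ∀ ω ω', X ω = X ω' ↔ Y ω = Y ω') :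
    ent p X = ent p Y := by
  have h1 : ent p (fun ω => (X ω, Y ω)) = ent p X :=
    ent_pair_of_det X Y fun ω ω' hh => (h ω ω').1 hh
  have h2 : ent p (fun ω => (Y ω, X ω)) = ent p Y :=
    ent_pair_of_det Y X fun ω ω' hh => (h ω ω').2 hh
  have h3 : ent p (fun ω => (Y ω, X ω)) = ent p (fun ω => (X ω, Y ω)) :=
    ent_comp_inj (fun ω => (X ω, Y ω)) Prod.swap Prod.swap_injective
  rw [← h1, ← h3, h2]

lemma pr_marg {α γ' : Type*} [Fintype α] [DecidableEq α] [Fintype γ'] [DecidableEq γ']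
    (A : Ω → α) (C : Ω → γ') (w : γ') :
    ∑ u, pr p (fun ω => (A ω, C ω)) (u, w) = pr p C w := by
  simp only [pr_eq_sum_ite]
  rw [Finset.sum_comm]
  refine Finset.sum_congr rfl fun ω _ => ?_
  simp only [Prod.mk.injEq, ite_and]
  rw [Finset.sum_ite_eq Finset.univ (A ω)]
  simp

end Aux2
section Aux3

open Finset Real

variable {Ω : Type*} [Fintype Ω] {p : Ω → ℝ}

lemma ent_eq_entL {α : Type*} [Fintype α] [DecidableEq α] (X : Ω → α) :
    ent p X = (-∑ a, pr p X a * Real.log (pr p X a)) / Real.log 2 := by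
  rw [ent, neg_div, neg_inj, Finset.sum_div]
  refine Finset.sum_congr rfl fun a _ => ?_
  rw [Real.logb, mul_div_assoc]

lemma ent_submod {α β γ' : Type*} [Fintype α] [DecidableEq α] [Fintype β] [DecidableEq β]
    [Fintype γ'] [DecidableEq γ'] (hp0 : ∀ ω, 0 ≤ p ω)
    (U : Ω → α) (V : Ω → β) (W : Ω → γ') :
    ent p (fun ω => (U ω, V ω, W ω)) + ent p W ≤
      ent p (fun ω => (U ω, W ω)) + ent p (fun ω => (V ω, W ω)) := by
  classical
  set Q : Ω → α × β × γ' := fun ω => (U ω, V ω, W ω) with hQ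
  set q : α × β × γ' → ℝ := pr p Q with hq
  set muw : α × γ' → ℝ := pr p (fun ω => (U ω, W ω)) with hmuw
  set mvw : β × γ' → ℝ := pr p (fun ω => (V ω, W ω)) with hmvw
  set mw : γ' → ℝ := pr p W with hmw
  -- marginal bounds
  have hq0 : ∀ t, 0 ≤ q t := fun t => pr_nonneg hp0 Q t
  have hmuw0 : ∀ c, 0 ≤ muw c := fun c => pr_nonneg hp0 _ c
  have hmvw0 : ∀ c, 0 ≤ mvw c := fun c => pr_nonneg hp0 _ c
  have hmw0 : ∀ c, 0 ≤ mw c := fun c => pr_nonneg hp0 _ c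
  have hq_le_uw : ∀ t : α × β × γ', q t ≤ muw (t.1, t.2.2) := fun t =>
    pr_le_pr_comp hp0 Q (fun t => (t.1, t.2.2)) t
  have hq_le_vw : ∀ t : α × β × γ', q t ≤ mvw (t.2.1, t.2.2) := fun t =>
    pr_le_pr_comp hp0 Q (fun t => (t.2.1, t.2.2)) t
  have hq_le_w : ∀ t : α × β × γ', q t ≤ mw t.2.2 := fun t =>
    pr_le_pr_comp hp0 Q (fun t => t.2.2) t
  -- rewrite all entropies as sums over the full tuple
  have eW : ent p W = (-∑ t, q t * Real.log (mw t.2.2)) / Real.log 2 := by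
    have h1 : ent p W = ent p (fun ω => (Q ω).2.2) := rfl
    rw [h1, ent_comp_expand Q (fun t => t.2.2)]
    rw [neg_div, neg_inj, Finset.sum_div]
    refine Finset.sum_congr rfl fun t _ => ?_
    rw [Real.logb, mul_div_assoc]
  have eUW : ent p (fun ω => (U ω, W ω)) =
      (-∑ t, q t * Real.log (muw (t.1, t.2.2))) / Real.log 2 := by
    have h1 : ent p (fun ω => (U ω, W ω)) = ent p (fun ω => ((Q ω).1, (Q ω).2.2)) := rfl
    rw [h1, ent_comp_expand Q (fun t => (t.1, t.2.2))]
    rw [neg_div, neg_inj, Finset.sum_div]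
    refine Finset.sum_congr rfl fun t _ => ?_
    rw [Real.logb, mul_div_assoc]
  have eVW : ent p (fun ω => (V ω, W ω)) =
      (-∑ t, q t * Real.log (mvw (t.2.1, t.2.2))) / Real.log 2 := by
    have h1 : ent p (fun ω => (V ω, W ω)) = ent p (fun ω => ((Q ω).2.1, (Q ω).2.2)) := rfl
    rw [h1, ent_comp_expand Q (fun t => (t.2.1, t.2.2))]
    rw [neg_div, neg_inj, Finset.sum_div]
    refine Finset.sum_congr rfl fun t _ => ?_
    rw [Real.logb, mul_div_assoc]
  have eQ : ent p Q = (-∑ t, q t * Real.log (q t)) / Real.log 2 := ent_eq_entL Q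
  -- the key real inequality
  set Φ : α × β × γ' → ℝ := fun t =>
    q t * (Real.log (muw (t.1, t.2.2)) + Real.log (mvw (t.2.1, t.2.2))
      - Real.log (q t) - Real.log (mw t.2.2)) with hΦ
  have key : ∑ t, Φ t ≤ 0 := by
    set Spos := Finset.univ.filter (fun t => 0 < q t) with hSpos
    have hrestrict : ∑ t, Φ t = ∑ t ∈ Spos, Φ t := by
      refine (Finset.sum_subset (Finset.filter_subset _ _) fun t _ ht => ?_).symm
      have : q t = 0 := le_antisymm (by simpa [hSpos] using ht) (hq0 t)
      simp [hΦ, this]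
    set b : α × β × γ' → ℝ := fun t => muw (t.1, t.2.2) * mvw (t.2.1, t.2.2) / mw t.2.2 with hb
    have hb0 : ∀ t, 0 ≤ b t := fun t =>
      div_nonneg (mul_nonneg (hmuw0 _) (hmvw0 _)) (hmw0 _)
    have step1 : ∑ t ∈ Spos, Φ t ≤ ∑ t ∈ Spos, (b t - q t) := by
      refine Finset.sum_le_sum fun t ht => ?_
      have hqt : 0 < q t := by simpa [hSpos] using ht
      have huw : 0 < muw (t.1, t.2.2) := lt_of_lt_of_le hqt (hq_le_uw t)
      have hvw : 0 < mvw (t.2.1, t.2.2) := lt_of_lt_of_le hqt (hq_le_vw t)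
      have hw : 0 < mw t.2.2 := lt_of_lt_of_le hqt (hq_le_w t)
      have hbt : 0 < b t := div_pos (mul_pos huw hvw) hw
      have hlog : Real.log (muw (t.1, t.2.2)) + Real.log (mvw (t.2.1, t.2.2))
          - Real.log (q t) - Real.log (mw t.2.2) = Real.log (b t / q t) := by
        rw [Real.log_div (ne_of_gt hbt) (ne_of_gt hqt), hb]
        rw [Real.log_div (ne_of_gt (mul_pos huw hvw)) (ne_of_gt hw),
          Real.log_mul (ne_of_gt huw) (ne_of_gt hvw)]
        ring
      have hΦt : Φ t = q t * Real.log (b t / q t) := by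
        simp only [hΦ]; rw [← hlog]
      rw [hΦt]
      have := Real.log_le_sub_one_of_pos (div_pos hbt hqt)
      calc q t * Real.log (b t / q t) ≤ q t * (b t / q t - 1) :=
            mul_le_mul_of_nonneg_left this (le_of_lt hqt)
        _ = b t - q t := by field_simp
    have hsumq : ∑ t ∈ Spos, q t = ∑ ω, p ω := by
      rw [Finset.sum_subset (Finset.filter_subset _ _) fun t _ ht => le_antisymm
        (by simpa [hSpos] using ht) (hq0 t)]
      exact sum_pr Q
    have hsumb : ∑ t ∈ Spos, b t ≤ ∑ ω, p ω := by
      set Tpos := Finset.univ.filter (fun t : α × β × γ' => 0 < mw t.2.2) with hTpos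
      have hsub : Spos ⊆ Tpos := by
        intro t ht
        simp only [hSpos, Finset.mem_filter, Finset.mem_univ, true_and] at ht
        simp only [hTpos, Finset.mem_filter, Finset.mem_univ, true_and]
        exact lt_of_lt_of_le ht (hq_le_w t)
      have h1 : ∑ t ∈ Spos, b t ≤ ∑ t ∈ Tpos, b t :=
        Finset.sum_le_sum_of_subset_of_nonneg hsub fun t _ _ => hb0 t
      have hmargu : ∀ w, ∑ u, muw (u, w) = mw w := fun w => pr_marg U W w
      have hmargv : ∀ w, ∑ v, mvw (v, w) = mw w := fun w => pr_marg V W w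
      have h2 : ∑ t ∈ Tpos, b t = ∑ w ∈ Finset.univ.filter (fun w => 0 < mw w), mw w := by
        rw [Finset.sum_filter, Finset.sum_filter, Fintype.sum_prod_type]
        rw [Finset.sum_comm, Fintype.sum_prod_type_right]
        refine Finset.sum_congr rfl fun w _ => ?_
        by_cases hw : 0 < mw w
        · simp only [hw, if_true, hb]
          have e1 : ∀ v : β, ∑ u, muw (u, w) * mvw (v, w) / mw w
              = mw w * (mvw (v, w) / mw w) := by
            intro v
            simp only [mul_div_assoc]
            rw [← Finset.sum_mul, hmargu w]
          have e2 : ∀ v : β, mw w * (mvw (v, w) / mw w) = mvw (v, w) := fun v => by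
            field_simp
          calc ∑ v : β, ∑ u : α, muw (u, w) * mvw (v, w) / mw w
              = ∑ v : β, mvw (v, w) := by
                refine Finset.sum_congr rfl fun v _ => ?_
                rw [e1 v, e2 v]
            _ = mw w := hmargv w
        · simp [hw]
      calc ∑ t ∈ Spos, b t ≤ ∑ t ∈ Tpos, b t := h1
        _ = ∑ w ∈ Finset.univ.filter (fun w => 0 < mw w), mw w := h2
        _ ≤ ∑ w, mw w := Finset.sum_le_sum_of_subset_of_nonneg
            (Finset.filter_subset _ _) (fun w _ _ => hmw0 w)
        _ = ∑ ω, p ω := sum_pr W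
    calc ∑ t, Φ t = ∑ t ∈ Spos, Φ t := hrestrict
      _ ≤ ∑ t ∈ Spos, (b t - q t) := step1
      _ = ∑ t ∈ Spos, b t - ∑ t ∈ Spos, q t := Finset.sum_sub_distrib _ _
      _ ≤ 0 := by rw [hsumq] at *; linarith
  -- conclude
  have hlog2 : (0:ℝ) < Real.log 2 := Real.log_pos one_lt_two
  have hids : ∑ t, Φ t = (∑ t, q t * Real.log (muw (t.1, t.2.2)))
      + (∑ t, q t * Real.log (mvw (t.2.1, t.2.2)))
      - (∑ t, q t * Real.log (q t)) - (∑ t, q t * Real.log (mw t.2.2)) := by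
    simp only [hΦ]
    rw [← Finset.sum_add_distrib, ← Finset.sum_sub_distrib, ← Finset.sum_sub_distrib]
    exact Finset.sum_congr rfl fun t _ => by ring
  rw [show ent p (fun ω => (U ω, V ω, W ω)) = ent p Q from rfl, eQ, eW, eUW, eVW,
    ← add_div, ← add_div]
  rw [div_le_div_iff_of_pos_right]
  · linarith [key, hids]
  · exact hlog2

end Aux3
section Aux4
set_option synthInstance.maxSize 2000
set_option maxHeartbeats 1000000
set_option linter.unusedSectionVars false

open Finset Real

variable {Ω V γ : Type*} [Fintype Ω] [Fintype V] [DecidableEq V]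
    {α β : V → Type*} [∀ v, Fintype (α v)] [∀ v, DecidableEq (α v)]
    [∀ v, Fintype (β v)] [∀ v, DecidableEq (β v)] [Fintype γ] [DecidableEq γ]

lemma mask_eq_iff (X : ∀ v, Ω → α v) (A : Finset V) (ω ω' : Ω) :
    mask X A ω = mask X A ω' ↔ ∀ v ∈ A, X v ω = X v ω' := by
  constructor
  · intro h v hv
    have := congrFun h v
    simp only [mask, if_pos hv] at this
    exact Option.some_injective _ this
  · intro h
    funext v
    by_cases hv : v ∈ A
    · simp only [mask, if_pos hv, h v hv]
    · simp only [mask, if_neg hv]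

/-- `H(X_A Y_B Z)`. -/
noncomputable def Jent (p : Ω → ℝ) (X : ∀ v, Ω → α v) (Y : ∀ v, Ω → β v) (Z : Ω → γ)
    (A B : Finset V) : ℝ :=
  ent p (fun ω => (mask X A ω, mask Y B ω, Z ω))

lemma ce_eq_Jent (p : Ω → ℝ) (X : ∀ v, Ω → α v) (Y : ∀ v, Ω → β v) (Z : Ω → γ)
    (AX AY BX BY : Finset V) :
    ce p X Y Z AX AY BX BY =
      Jent p X Y Z (AX ∪ BX) (AY ∪ BY) - Jent p X Y Z BX BY := by
  rw [ce, cent]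
  unfold Jent
  congr 1
  refine ent_congr _ _ fun ω ω' => ?_
  simp only [Prod.ext_iff, mask_eq_iff, Finset.mem_union]
  constructor
  · rintro ⟨⟨h1, h2⟩, h3, h4, h5⟩
    exact ⟨fun v hv => hv.elim (h1 v) (h3 v), fun v hv => hv.elim (h2 v) (h4 v), h5⟩
  · rintro ⟨h1, h2, h3⟩
    exact ⟨⟨fun v hv => h1 v (Or.inl hv), fun v hv => h2 v (Or.inl hv)⟩,
      fun v hv => h1 v (Or.inr hv), fun v hv => h2 v (Or.inr hv), h3⟩

lemma Jent_submod (p : Ω → ℝ) (hp0 : ∀ ω, 0 ≤ p ω)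
    (X : ∀ v, Ω → α v) (Y : ∀ v, Ω → β v) (Z : Ω → γ) (A A' B B' : Finset V) :
    Jent p X Y Z (A ∪ A') (B ∪ B') + Jent p X Y Z (A ∩ A') (B ∩ B') ≤
      Jent p X Y Z A B + Jent p X Y Z A' B' := by
  have h := ent_submod (p := p) hp0
    (fun ω => (mask X (A \ A') ω, mask Y (B \ B') ω))
    (fun ω => (mask X (A' \ A) ω, mask Y (B' \ B) ω))
    (fun ω => (mask X (A ∩ A') ω, mask Y (B ∩ B') ω, Z ω))
  have e1 : ent p (fun ω => ((mask X (A \ A') ω, mask Y (B \ B') ω),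
      (mask X (A' \ A) ω, mask Y (B' \ B) ω),
      (mask X (A ∩ A') ω, mask Y (B ∩ B') ω, Z ω))) = Jent p X Y Z (A ∪ A') (B ∪ B') := by
    unfold Jent
    refine ent_congr _ _ fun ω ω' => ?_
    simp only [Prod.ext_iff, mask_eq_iff, Finset.mem_union, Finset.mem_inter,
      Finset.mem_sdiff]
    constructor
    · rintro ⟨⟨h1, h2⟩, ⟨h3, h4⟩, h5, h6, h7⟩
      refine ⟨fun v hv => ?_, fun v hv => ?_, h7⟩
      · by_cases hA : v ∈ A
        · by_cases hA' : v ∈ A'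
          · exact h5 v ⟨hA, hA'⟩
          · exact h1 v ⟨hA, hA'⟩
        · exact h3 v ⟨hv.resolve_left hA, hA⟩
      · by_cases hB : v ∈ B
        · by_cases hB' : v ∈ B'
          · exact h6 v ⟨hB, hB'⟩
          · exact h2 v ⟨hB, hB'⟩
        · exact h4 v ⟨hv.resolve_left hB, hB⟩
    · rintro ⟨h1, h2, h3⟩
      exact ⟨⟨fun v hv => h1 v (Or.inl hv.1), fun v hv => h2 v (Or.inl hv.1)⟩,
        ⟨fun v hv => h1 v (Or.inr hv.1), fun v hv => h2 v (Or.inr hv.1)⟩,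
        fun v hv => h1 v (Or.inl hv.1), fun v hv => h2 v (Or.inl hv.1), h3⟩
  have e2 : ent p (fun ω => ((mask X (A \ A') ω, mask Y (B \ B') ω),
      (mask X (A ∩ A') ω, mask Y (B ∩ B') ω, Z ω))) = Jent p X Y Z A B := by
    unfold Jent
    refine ent_congr _ _ fun ω ω' => ?_
    simp only [Prod.ext_iff, mask_eq_iff, Finset.mem_inter, Finset.mem_sdiff]
    constructor
    · rintro ⟨⟨h1, h2⟩, h3, h4, h5⟩
      refine ⟨fun v hv => ?_, fun v hv => ?_, h5⟩
      · by_cases hA' : v ∈ A'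
        · exact h3 v ⟨hv, hA'⟩
        · exact h1 v ⟨hv, hA'⟩
      · by_cases hB' : v ∈ B'
        · exact h4 v ⟨hv, hB'⟩
        · exact h2 v ⟨hv, hB'⟩
    · rintro ⟨h1, h2, h3⟩
      exact ⟨⟨fun v hv => h1 v hv.1, fun v hv => h2 v hv.1⟩,
        fun v hv => h1 v hv.1, fun v hv => h2 v hv.1, h3⟩
  have e3 : ent p (fun ω => ((mask X (A' \ A) ω, mask Y (B' \ B) ω),
      (mask X (A ∩ A') ω, mask Y (B ∩ B') ω, Z ω))) = Jent p X Y Z A' B' := by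
    unfold Jent
    refine ent_congr _ _ fun ω ω' => ?_
    simp only [Prod.ext_iff, mask_eq_iff, Finset.mem_inter, Finset.mem_sdiff]
    constructor
    · rintro ⟨⟨h1, h2⟩, h3, h4, h5⟩
      refine ⟨fun v hv => ?_, fun v hv => ?_, h5⟩
      · by_cases hA : v ∈ A
        · exact h3 v ⟨hA, hv⟩
        · exact h1 v ⟨hv, hA⟩
      · by_cases hB : v ∈ B
        · exact h4 v ⟨hB, hv⟩
        · exact h2 v ⟨hv, hB⟩
    · rintro ⟨h1, h2, h3⟩
      exact ⟨⟨fun v hv => h1 v hv.1, fun v hv => h2 v hv.1⟩,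
        fun v hv => h1 v hv.2, fun v hv => h2 v hv.2, h3⟩
  rw [e1, e2, e3] at h
  exact h

lemma layerEnt_eq_Jent (p : Ω → ℝ) (X : ∀ v, Ω → α v) (Y : ∀ v, Ω → β v) (Z : Ω → γ)
    (K : ℕ) (L : ℕ → Finset V) (S : Finset V) :
    layerEnt p X Y Z K L S = ∑ i ∈ Finset.Icc 1 (K + 1),
      (Jent p X Y Z ((S ∩ L i) ∪ lowUnion L i) ((S ∩ L (i - 1)) ∪ lowUnion L (i - 1))
        - Jent p X Y Z (lowUnion L i) (lowUnion L (i - 1))) := by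
  refine Finset.sum_congr rfl fun i _ => ?_
  exact ce_eq_Jent p X Y Z _ _ _ _

lemma layerEnt_empty (p : Ω → ℝ) (X : ∀ v, Ω → α v) (Y : ∀ v, Ω → β v) (Z : Ω → γ)
    (K : ℕ) (L : ℕ → Finset V) :
    layerEnt p X Y Z K L ∅ = 0 := by
  rw [layerEnt_eq_Jent]
  refine Finset.sum_eq_zero fun i _ => ?_
  simp

lemma layerEnt_submod (p : Ω → ℝ) (hp0 : ∀ ω, 0 ≤ p ω)
    (X : ∀ v, Ω → α v) (Y : ∀ v, Ω → β v) (Z : Ω → γ)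
    (K : ℕ) (L : ℕ → Finset V) (S S' : Finset V) :
    layerEnt p X Y Z K L (S ∪ S') + layerEnt p X Y Z K L (S ∩ S') ≤
      layerEnt p X Y Z K L S + layerEnt p X Y Z K L S' := by
  simp only [layerEnt_eq_Jent, ← Finset.sum_add_distrib]
  refine Finset.sum_le_sum fun i _ => ?_
  have h := Jent_submod p hp0 X Y Z ((S ∩ L i) ∪ lowUnion L i) ((S' ∩ L i) ∪ lowUnion L i)
    ((S ∩ L (i-1)) ∪ lowUnion L (i-1)) ((S' ∩ L (i-1)) ∪ lowUnion L (i-1))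
  have eu : ∀ (j : ℕ), ((S ∩ L j) ∪ lowUnion L j) ∪ ((S' ∩ L j) ∪ lowUnion L j)
      = ((S ∪ S') ∩ L j) ∪ lowUnion L j := by
    intro j; ext v
    simp only [Finset.mem_union, Finset.mem_inter]
    tauto
  have ei : ∀ (j : ℕ), ((S ∩ L j) ∪ lowUnion L j) ∩ ((S' ∩ L j) ∪ lowUnion L j)
      = ((S ∩ S') ∩ L j) ∪ lowUnion L j := by
    intro j; ext v
    simp only [Finset.mem_union, Finset.mem_inter]
    tauto
  rw [eu, eu, ei, ei] at h
  linarith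

end Aux4
section Aux5

open Finset

variable {V : Type*} [Fintype V] [DecidableEq V]

lemma compl_union_self' (T : Finset V) : Tᶜ ∪ T = Finset.univ := by
  ext v; simp [Finset.mem_union, Finset.mem_compl]; tauto

lemma facet_eq_abstract (f g : Finset V → ℝ) (T : Finset V)
    (hId1 : ∀ U, U ⊆ T → g U = f (Tᶜ ∪ U) - f Tᶜ)
    (hA : ∀ W, T ⊆ W → g W = f (W ∩ Tᶜ) + g T)
    (hsubf : ∀ S S', f (S ∪ S') + f (S ∩ S') ≤ f S + f S')
    (hsubg : ∀ S S', g (S ∪ S') + g (S ∩ S') ≤ g S + g S') :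
    facet f T = facet g Tᶜ := by
  have hgT : g T = f Finset.univ - f Tᶜ := by
    have := hId1 T (subset_refl T)
    rwa [compl_union_self'] at this
  have huniv : g Finset.univ = f Finset.univ := by
    have h := hA Finset.univ (Finset.subset_univ T)
    rw [Finset.univ_inter] at h
    linarith
  ext x
  simp only [facet, Set.mem_setOf_eq]
  constructor
  · rintro ⟨⟨hsum, hineq⟩, htight⟩
    have hxle : ∀ W : Finset V, ∑ v ∈ W, x v ≤ f W := by
      intro W
      have h := hineq Wᶜ
      rw [compl_compl] at h
      have h2 := Finset.sum_add_sum_compl W x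
      linarith
    have hxTc : ∑ v ∈ Tᶜ, x v = f Tᶜ := by
      have h2 := Finset.sum_add_sum_compl T x
      linarith
    have hxle_g : ∀ W : Finset V, ∑ v ∈ W, x v ≤ g W := by
      intro W
      have hdisj : Disjoint (W ∩ T) (W ∩ Tᶜ) :=
        Finset.disjoint_left.2 fun v hv hv' => by
          simp only [Finset.mem_inter, Finset.mem_compl] at hv hv'
          exact hv'.2 hv.2
      have hun : (W ∩ T) ∪ (W ∩ Tᶜ) = W := by
        rw [← Finset.inter_union_distrib_left, Finset.union_compl, Finset.inter_univ]
      have hW1 : ∑ v ∈ W, x v = ∑ v ∈ W ∩ T, x v + ∑ v ∈ W ∩ Tᶜ, x v := by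
        rw [← hun, Finset.sum_union hdisj]
        rw [hun]
      have b1 : ∑ v ∈ W ∩ Tᶜ, x v ≤ f (W ∩ Tᶜ) := hxle _
      have b2 : ∑ v ∈ W ∩ T, x v ≤ g (W ∩ T) := by
        have hUsub : W ∩ T ⊆ T := Finset.inter_subset_right
        have hsd : ∑ v ∈ T \ (W ∩ T), x v = ∑ v ∈ T, x v - ∑ v ∈ W ∩ T, x v :=
          Finset.sum_sdiff_eq_sub hUsub
        have hineq2 := hineq (T \ (W ∩ T))
        have hcompl : (T \ (W ∩ T))ᶜ = Tᶜ ∪ (W ∩ T) := by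
          ext v
          simp only [Finset.mem_compl, Finset.mem_sdiff, Finset.mem_union, Finset.mem_inter]
          tauto
        rw [hcompl] at hineq2
        have hgU := hId1 (W ∩ T) hUsub
        linarith
      have b3 : g (W ∩ T) + f (W ∩ Tᶜ) ≤ g W := by
        have hsub := hsubg W T
        have hWT := hA (W ∪ T) Finset.subset_union_right
        have he : (W ∪ T) ∩ Tᶜ = W ∩ Tᶜ := by
          rw [Finset.union_inter_distrib_right, Finset.inter_compl, Finset.union_empty]
        rw [he] at hWT
        linarith
      linarith
    refine ⟨⟨by rw [huniv]; exact hsum, fun S => ?_⟩, ?_⟩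
    · have h := hxle_g Sᶜ
      have h2 := Finset.sum_add_sum_compl S x
      linarith [huniv, hsum]
    · rw [compl_compl, huniv, hgT]
      linarith
  · rintro ⟨⟨hsum, hineq⟩, htight⟩
    rw [compl_compl] at htight
    have hxle_g : ∀ W : Finset V, ∑ v ∈ W, x v ≤ g W := by
      intro W
      have h := hineq Wᶜ
      rw [compl_compl] at h
      have h2 := Finset.sum_add_sum_compl W x
      linarith
    have hxT : ∑ v ∈ T, x v = f Finset.univ - f Tᶜ := by
      have h2 := Finset.sum_add_sum_compl T x
      linarith [hgT, huniv]
    have hxle_f : ∀ W : Finset V, ∑ v ∈ W, x v ≤ f W := by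
      intro W
      have hdisj : Disjoint (W ∩ T) (W ∩ Tᶜ) :=
        Finset.disjoint_left.2 fun v hv hv' => by
          simp only [Finset.mem_inter, Finset.mem_compl] at hv hv'
          exact hv'.2 hv.2
      have hun : (W ∩ T) ∪ (W ∩ Tᶜ) = W := by
        rw [← Finset.inter_union_distrib_left, Finset.union_compl, Finset.inter_univ]
      have hW1 : ∑ v ∈ W, x v = ∑ v ∈ W ∩ T, x v + ∑ v ∈ W ∩ Tᶜ, x v := by
        rw [← hun, Finset.sum_union hdisj]
        rw [hun]
      have c1 : ∑ v ∈ W ∩ T, x v ≤ g (W ∩ T) := hxle_g _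
      have c2 : ∑ v ∈ W ∩ Tᶜ, x v ≤ f (W ∩ Tᶜ) := by
        have hU'sub : W ∩ Tᶜ ⊆ Tᶜ := Finset.inter_subset_right
        have hsd : ∑ v ∈ Tᶜ \ (W ∩ Tᶜ), x v = ∑ v ∈ Tᶜ, x v - ∑ v ∈ W ∩ Tᶜ, x v :=
          Finset.sum_sdiff_eq_sub hU'sub
        have hineq2 := hineq (Tᶜ \ (W ∩ Tᶜ))
        have hcompl : (Tᶜ \ (W ∩ Tᶜ))ᶜ = T ∪ (W ∩ Tᶜ) := by
          ext v
          simp only [Finset.mem_compl, Finset.mem_sdiff, Finset.mem_union, Finset.mem_inter]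
          tauto
      
        rw [hcompl] at hineq2
        have hgTU := hA (T ∪ (W ∩ Tᶜ)) Finset.subset_union_left
        have he : (T ∪ (W ∩ Tᶜ)) ∩ Tᶜ = W ∩ Tᶜ := by
          ext v
          simp only [Finset.mem_union, Finset.mem_inter, Finset.mem_compl]
          tauto
        rw [he] at hgTU
        linarith
      have c3 : g (W ∩ T) + f (W ∩ Tᶜ) ≤ f W := by
        have hsub := hsubf W Tᶜ
        have hgWT := hId1 (W ∩ T) Finset.inter_subset_right
        have he : Tᶜ ∪ (W ∩ T) = W ∪ Tᶜ := by
          ext v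
          simp only [Finset.mem_union, Finset.mem_inter, Finset.mem_compl]
          tauto
        rw [he] at hgWT
        linarith
      linarith
    refine ⟨⟨by rw [← huniv]; exact hsum, fun S => ?_⟩, hxT⟩
    have h := hxle_f Sᶜ
    have h2 := Finset.sum_add_sum_compl S x
    linarith [huniv, hsum]

end Aux5
section Aux6
set_option linter.unusedSectionVars false
set_option synthInstance.maxSize 2000
set_option maxHeartbeats 1000000

open Finset Real

variable {Ω V γ : Type*} [Fintype Ω] [Fintype V] [DecidableEq V]
    {α β : V → Type*} [∀ v, Fintype (α v)] [∀ v, DecidableEq (α v)]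
    [∀ v, Fintype (β v)] [∀ v, DecidableEq (β v)] [Fintype γ] [DecidableEq γ]

lemma lowUnion_zero (M : ℕ → Finset V) : lowUnion M 0 = ∅ := by
  simp [lowUnion]

lemma lowUnion_succ (M : ℕ → Finset V) (k : ℕ) :
    lowUnion M (k + 1) = M k ∪ lowUnion M k := by
  simp [lowUnion, Finset.range_add_one]

section WithPartition

variable {K : ℕ} {L : ℕ → Finset V} {T : Finset V}

lemma interleave_zero (hL : IsOrdPart K L) : interleave L T 0 = ∅ := by
  have hL0 : L 0 = ∅ := hL.2.1 0 (Or.inl rfl)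
  simp [interleave, hL0]

lemma lowUnion_interleave (hL : IsOrdPart K L) (k : ℕ) :
    lowUnion (interleave L T) (k + 1) = (Tᶜ ∩ L k) ∪ lowUnion L k := by
  have hL0 : L 0 = ∅ := hL.2.1 0 (Or.inl rfl)
  induction k with
  | zero =>
    rw [lowUnion_succ, lowUnion_zero, lowUnion_zero, interleave_zero hL]
    simp [hL0]
  | succ n ih =>
    rw [lowUnion_succ, ih, lowUnion_succ]
    ext v
    simp only [interleave, Nat.add_sub_cancel, Finset.mem_union, Finset.mem_inter,
      Finset.mem_compl]
    by_cases hv : v ∈ T <;> tauto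

/-- the argument identity for `U ⊆ T`. -/
lemma arg_id1 (hL : IsOrdPart K L) {U : Finset V} (hU : U ⊆ T) (j : ℕ) :
    (U ∩ interleave L T j) ∪ lowUnion (interleave L T) j =
      ((Tᶜ ∪ U) ∩ L (j - 1)) ∪ lowUnion L (j - 1) := by
  have hL0 : L 0 = ∅ := hL.2.1 0 (Or.inl rfl)
  match j with
  | 0 => simp [interleave_zero hL, lowUnion_zero, hL0]
  | (n+1) =>
    rw [lowUnion_interleave hL, Nat.add_sub_cancel]
    ext v
    have hv : v ∈ U → v ∈ T := fun h => hU h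
    simp only [interleave, Nat.add_sub_cancel, Finset.mem_union, Finset.mem_inter,
      Finset.mem_compl]
    tauto

lemma lowUnion_interleave' (hL : IsOrdPart K L) (j : ℕ) :
    lowUnion (interleave L T) j = (Tᶜ ∩ L (j - 1)) ∪ lowUnion L (j - 1) := by
  have h := arg_id1 (T := T) hL (Finset.empty_subset T) j
  simpa using h

/-- the argument identity for `T ⊆ W`. -/
lemma arg_id2 (hL : IsOrdPart K L) {W : Finset V} (hW : T ⊆ W) (j : ℕ) :
    (W ∩ interleave L T j) ∪ lowUnion (interleave L T) j =
      ((W ∩ Tᶜ) ∩ L j) ∪ lowUnion L j := by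
  have hL0 : L 0 = ∅ := hL.2.1 0 (Or.inl rfl)
  match j with
  | 0 => simp [interleave_zero hL, lowUnion_zero, hL0]
  | (n+1) =>
    rw [lowUnion_interleave hL, lowUnion_succ]
    ext v
    have hv : v ∈ T → v ∈ W := fun h => hW h
    simp only [interleave, Nat.add_sub_cancel, Finset.mem_union, Finset.mem_inter,
      Finset.mem_compl]
    tauto

variable (p : Ω → ℝ) (X : ∀ v, Ω → α v) (Y : ∀ v, Ω → β v) (Z : Ω → γ)

lemma layerEnt_id1 (hL : IsOrdPart K L) {U : Finset V} (hU : U ⊆ T) :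
    layerEnt p X Y Z (K + 1) (interleave L T) U =
      layerEnt p X Y Z K L (Tᶜ ∪ U) - layerEnt p X Y Z K L Tᶜ := by
  have hL0 : L 0 = ∅ := hL.2.1 0 (Or.inl rfl)
  have hgU : layerEnt p X Y Z (K + 1) (interleave L T) U =
      ∑ k ∈ Finset.Icc 1 (K + 1 + 1),
        (Jent p X Y Z (((Tᶜ ∪ U) ∩ L (k - 1)) ∪ lowUnion L (k - 1))
            (((Tᶜ ∪ U) ∩ L (k - 1 - 1)) ∪ lowUnion L (k - 1 - 1))
          - Jent p X Y Z ((Tᶜ ∩ L (k - 1)) ∪ lowUnion L (k - 1))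
            ((Tᶜ ∩ L (k - 1 - 1)) ∪ lowUnion L (k - 1 - 1))) := by
    rw [layerEnt_eq_Jent]
    refine Finset.sum_congr rfl fun k _ => ?_
    rw [arg_id1 hL hU k, arg_id1 hL hU (k - 1), lowUnion_interleave' hL k,
      lowUnion_interleave' hL (k - 1)]
  rw [hgU]
  rw [show Finset.Icc 1 (K + 1 + 1) = (Finset.Icc 0 (K + 1)).image (· + 1) by
    ext n
    simp only [Finset.mem_Icc, Finset.mem_image]
    constructor
    · intro h; exact ⟨n - 1, by omega, by omega⟩
    · rintro ⟨a, ha, rfl⟩; omega]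
  rw [Finset.sum_image (by intro a _ b _ h; simp only at h; omega)]
  simp only [Nat.add_sub_cancel]
  rw [show Finset.Icc 0 (K + 1) = insert 0 (Finset.Icc 1 (K + 1)) by
    ext n; simp only [Finset.mem_insert, Finset.mem_Icc]; omega]
  rw [Finset.sum_insert (by simp)]
  have h0 : (Jent p X Y Z (((Tᶜ ∪ U) ∩ L (0 - 1)) ∪ lowUnion L (0 - 1))
      (((Tᶜ ∪ U) ∩ L (0 - 1 - 1)) ∪ lowUnion L (0 - 1 - 1))
    - Jent p X Y Z ((Tᶜ ∩ L (0 - 1)) ∪ lowUnion L (0 - 1))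
      ((Tᶜ ∩ L (0 - 1 - 1)) ∪ lowUnion L (0 - 1 - 1))) = 0 := by
    simp [Nat.zero_sub, lowUnion_zero, hL0]
  rw [h0, zero_add]
  rw [layerEnt_eq_Jent p X Y Z K L (Tᶜ ∪ U), layerEnt_eq_Jent p X Y Z K L Tᶜ,
    ← Finset.sum_sub_distrib]
  refine Finset.sum_congr rfl fun i _ => by ring

lemma layerEnt_id2 (hL : IsOrdPart K L) {W : Finset V} (hW : T ⊆ W) :
    layerEnt p X Y Z (K + 1) (interleave L T) W =
      layerEnt p X Y Z K L (W ∩ Tᶜ) +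
        layerEnt p X Y Z (K + 1) (interleave L T) T := by
  have hL0 : L 0 = ∅ := hL.2.1 0 (Or.inl rfl)
  have hLK1 : L (K + 1) = ∅ := hL.2.1 (K + 1) (Or.inr (by omega))
  have hLK2 : L (K + 2) = ∅ := hL.2.1 (K + 2) (Or.inr (by omega))
  have hlowK1 : lowUnion L (K + 1) = Finset.univ := hL.2.2.2
  have hlowK2 : lowUnion L (K + 2) = Finset.univ := by
    rw [lowUnion_succ, hlowK1]
    simp
  -- a common expression for `g W - f (W ∩ Tᶜ)`
  have hmain : ∀ W' : Finset V, T ⊆ W' →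
      layerEnt p X Y Z (K + 1) (interleave L T) W'
        - layerEnt p X Y Z K L (W' ∩ Tᶜ) =
      ∑ k ∈ Finset.Icc 1 (K + 1 + 1),
        (Jent p X Y Z (lowUnion L k) (lowUnion L (k - 1))
          - Jent p X Y Z (lowUnion (interleave L T) k)
              (lowUnion (interleave L T) (k - 1))) := by
    intro W' hW'
    have hg : layerEnt p X Y Z (K + 1) (interleave L T) W' =
        ∑ k ∈ Finset.Icc 1 (K + 1 + 1),
          (Jent p X Y Z (((W' ∩ Tᶜ) ∩ L k) ∪ lowUnion L k)
              (((W' ∩ Tᶜ) ∩ L (k - 1)) ∪ lowUnion L (k - 1))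
            - Jent p X Y Z (lowUnion (interleave L T) k)
                (lowUnion (interleave L T) (k - 1))) := by
      rw [layerEnt_eq_Jent]
      refine Finset.sum_congr rfl fun k _ => ?_
      rw [arg_id2 hL hW' k, arg_id2 hL hW' (k - 1)]
    have hf : layerEnt p X Y Z K L (W' ∩ Tᶜ) =
        ∑ k ∈ Finset.Icc 1 (K + 1 + 1),
          (Jent p X Y Z (((W' ∩ Tᶜ) ∩ L k) ∪ lowUnion L k)
              (((W' ∩ Tᶜ) ∩ L (k - 1)) ∪ lowUnion L (k - 1))
            - Jent p X Y Z (lowUnion L k) (lowUnion L (k - 1))) := by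
      rw [layerEnt_eq_Jent]
      rw [show Finset.Icc 1 (K + 1 + 1) = insert (K + 1 + 1) (Finset.Icc 1 (K + 1)) by
        ext n; simp only [Finset.mem_insert, Finset.mem_Icc]; omega]
      rw [Finset.sum_insert (by simp)]
      have hz : (Jent p X Y Z (((W' ∩ Tᶜ) ∩ L (K + 1 + 1)) ∪ lowUnion L (K + 1 + 1))
          (((W' ∩ Tᶜ) ∩ L (K + 1 + 1 - 1)) ∪ lowUnion L (K + 1 + 1 - 1))
        - Jent p X Y Z (lowUnion L (K + 1 + 1)) (lowUnion L (K + 1 + 1 - 1))) = 0 := by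
        have e1 : K + 1 + 1 = K + 2 := by omega
        have e2 : K + 1 + 1 - 1 = K + 1 := by omega
        rw [e1, e2, hLK2, hLK1, hlowK2, hlowK1]
        simp
      rw [hz, zero_add]
    rw [hg, hf, ← Finset.sum_sub_distrib]
    refine Finset.sum_congr rfl fun k _ => by ring
  have h1 := hmain W hW
  have h2 := hmain T (subset_refl T)
  have h3 : layerEnt p X Y Z K L (T ∩ Tᶜ) = 0 := by
    rw [Finset.inter_compl]
    exact layerEnt_empty p X Y Z K L
  rw [h3] at h2
  linarith

end WithPartition
end Aux6

/-- For the interleaved partition `C*` (with `K+1` layers, `L_k* = (T∩L_{k−1}) ∪ (Tᶜ∩L_k)`),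
the layered conditional entropies satisfy `h_C(S | Tᶜ∖S) = h_{C*}(S | V∖S)` for every
`S ⊆ Tᶜ`; hence the facet `F_{h_C,T}` of `P_{h_C}` coincides with the facet
`F_{h_{C*},Tᶜ}` of `P_{h_{C*}}`. -/
theorem interleave_facet_eq {Ω V γ : Type*} [Fintype Ω] [Fintype V] [DecidableEq V]
    {α β : V → Type*} [∀ v, Fintype (α v)] [∀ v, DecidableEq (α v)]
    [∀ v, Fintype (β v)] [∀ v, DecidableEq (β v)] [Fintype γ] [DecidableEq γ]
    (p : Ω → ℝ) (hp0 : ∀ ω, 0 ≤ p ω) (hp1 : ∑ ω, p ω = 1)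
    (X : ∀ v, Ω → α v) (Y : ∀ v, Ω → β v) (Z : Ω → γ)
    (K : ℕ) (L : ℕ → Finset V) (hL : IsOrdPart K L) (T : Finset V) :
    (∀ S ⊆ Tᶜ,
      layerEnt p X Y Z K L Tᶜ - layerEnt p X Y Z K L (Tᶜ \ S) =
        layerEnt p X Y Z (K + 1) (interleave L T) Finset.univ -
          layerEnt p X Y Z (K + 1) (interleave L T) Sᶜ) ∧
    facet (layerEnt p X Y Z K L) T =
      facet (layerEnt p X Y Z (K + 1) (interleave L T)) Tᶜ := by
  constructor
  · intro S hS
    have hTsub : T ⊆ Sᶜ := by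
      intro v hv
      simp only [Finset.mem_compl]
      intro hvS
      exact (Finset.mem_compl.1 (hS hvS)) hv
    have h0 := layerEnt_id2 p X Y Z hL (Finset.subset_univ T)
    rw [Finset.univ_inter] at h0
    have h1 := layerEnt_id2 p X Y Z hL hTsub
    have h2 : Sᶜ ∩ Tᶜ = Tᶜ \ S := by
      ext v; simp only [Finset.mem_inter, Finset.mem_compl, Finset.mem_sdiff]; tauto
    rw [h2] at h1
    linarith
  · refine facet_eq_abstract _ _ T ?_ ?_ ?_ ?_
    · intro U hU; exact layerEnt_id1 p X Y Z hL hU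
    · intro W hW; exact layerEnt_id2 p X Y Z hL hW
    · intro S S'; exact layerEnt_submod p hp0 X Y Z K L S S'
    · intro S S'; exact layerEnt_submod p hp0 X Y Z (K + 1) (interleave L T) S S'
end
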